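/- Let p be a prime not dividing n (so p is very good for type A_{n-1}) and q a power of p. The number of monic degree-n polynomials over F_q with vanishing coefficient of x^{n-1} that split completely into linear factors over F_q equals binomial(q+n-1, n)/q = ∏_{i=1}^{n-1}(q+i)/n!. -/

import Mathlib

open Polynomial

section Aux

lemma ascFactorial_prod (q : ℕ) : ∀ m : ℕ,
    q.ascFactorial (m + 1) = q * ∏ i ∈ Finset.range m, (q + i + 1)
  | 0 => by simp [Nat.ascFactorial_succ]
  | m + 1 => by
    rw [Nat.ascFactorial_succ, ascFactorial_prod q m, Finset.prod_range_succ]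
    ring

variable (F : Type*) [Field F]

/-- The translation equivalence on multisets of fixed card. -/
noncomputable def multisetShiftEquiv (n : ℕ) (hn : (n : F) ≠ 0) :
    {s : Multiset F // Multiset.card s = n} ≃
      {s : Multiset F // Multiset.card s = n ∧ s.sum = 0} × F := by
  classical
  refine
    { toFun := fun s => (⟨s.1.map (fun x => x - s.1.sum / n), ?_, ?_⟩, s.1.sum / n)
      invFun := fun t => ⟨t.1.1.map (fun x => x + t.2), by simp [t.1.2.1]⟩
      left_inv := ?_
      right_inv := ?_ }
  · simp [s.2]
  · have : (s.1.map (fun x => x - s.1.sum / n)).sum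
        = s.1.sum - (Multiset.card s.1) • (s.1.sum / n) := by
      simp [sub_eq_add_neg, Multiset.sum_map_add, Multiset.map_const']
    rw [this, s.2, nsmul_eq_mul]
    field_simp
    simp
  · rintro ⟨s, hs⟩
    ext1
    simp only [Multiset.map_map, Function.comp]
    simp
  · rintro ⟨⟨t, ht, hsum⟩, a⟩
    have hts : (t.map (fun x => x + a)).sum = (n : F) * a := by
      have : (t.map (fun x => x + a)).sum = t.sum + (Multiset.card t) • a := by
        simp [Multiset.sum_map_add, Multiset.map_const']
      rw [this, hsum, ht, nsmul_eq_mul, zero_add]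
    have ha : (t.map (fun x => x + a)).sum / n = a := by
      rw [hts]; field_simp
    simp only [Prod.mk.injEq, Subtype.mk.injEq]
    constructor
    · rw [ha, Multiset.map_map]
      simp [Function.comp_def]
    · exact ha

/-- Trace-zero split monic polynomials of degree `n` correspond to multisets of
card `n` with sum `0`. -/
noncomputable def polyMultisetEquiv (n : ℕ) (hn : 1 ≤ n) :
    {f : F[X] // f.Monic ∧ f.natDegree = n ∧ f.coeff (n - 1) = 0 ∧
        f.Splits} ≃
      {s : Multiset F // Multiset.card s = n ∧ s.sum = 0} := by
  classical
  refine
    { toFun := fun f => ⟨f.1.roots, ?_, ?_⟩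
      invFun := fun s => ⟨(s.1.map (fun a => X - C a)).prod, ?_, ?_, ?_, ?_⟩
      left_inv := ?_
      right_inv := ?_ }
  · obtain ⟨hm, hd, hc, hs⟩ := f.2
    rw [(splits_iff_card_roots).mp hs, hd]
  · obtain ⟨hm, hd, hc, hs⟩ := f.2
    have heq := hs.eq_prod_roots_of_monic hm
    have hnc : f.1.nextCoeff = -(f.1.roots.sum) := by
      conv_lhs => rw [heq]
      exact multiset_prod_X_sub_C_nextCoeff _
    rw [nextCoeff_of_natDegree_pos (by omega : 0 < f.1.natDegree), hd, hc] at hnc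
    exact neg_eq_zero.mp hnc.symm
  · exact monic_multiset_prod_of_monic _ _ fun a _ => monic_X_sub_C a
  · rw [natDegree_multiset_prod_X_sub_C_eq_card, s.2.1]
  · have hnc := multiset_prod_X_sub_C_nextCoeff s.1
    rw [s.2.2, neg_zero] at hnc
    have hdeg : ((s.1.map (fun a => X - C a)).prod).natDegree = n := by
      rw [natDegree_multiset_prod_X_sub_C_eq_card, s.2.1]
    have h := nextCoeff_of_natDegree_pos
      (show 0 < ((s.1.map (fun a => X - C a)).prod).natDegree by omega)
    rw [hdeg, hnc] at h
    exact h.symm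
  · rw [splits_iff_exists_multiset]
    refine ⟨s.1, ?_⟩
    have hm : ((s.1.map (fun a => X - C a)).prod).Monic :=
      monic_multiset_prod_of_monic _ _ fun a _ => monic_X_sub_C a
    simp [hm.leadingCoeff, Polynomial.map_multiset_prod, Multiset.map_map]
  · rintro ⟨f, hm, hd, hc, hs⟩
    ext1
    exact (hs.eq_prod_roots_of_monic hm).symm
  · rintro ⟨s, hcard, hsum⟩
    ext1
    exact roots_multiset_prod_X_sub_C s

end Aux

/-- Let `p ∤ n` (so `p` is very good for type `A_{n-1}`) and `q` a power of
`p`. The number of monic degree-`n` polynomials over `F_q` with vanishing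
coefficient of `x^{n-1}` that split completely into linear factors is
`C(q+n-1, n)/q = ∏_{i=1}^{n-1}(q+i)/n!`. -/
theorem card_split_trace_zero (F : Type*) [Field F] [Fintype F] (p n q : ℕ)
    (hp : p.Prime) [CharP F p] (hpn : ¬ p ∣ n) (hq : Fintype.card F = q)
    (hn : 1 ≤ n) :
    Nat.card {f : F[X] //
        f.Monic ∧ f.natDegree = n ∧ f.coeff (n - 1) = 0 ∧
          f.Splits} * q =
      Nat.choose (q + n - 1) n ∧
    Nat.card {f : F[X] //
        f.Monic ∧ f.natDegree = n ∧ f.coeff (n - 1) = 0 ∧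
          f.Splits} * Nat.factorial n =
      ∏ i ∈ Finset.range (n - 1), (q + i + 1) := by
  classical
  have hnF : (n : F) ≠ 0 := by
    rw [Ne, CharP.cast_eq_zero_iff F p n]; exact hpn
  have e1 := polyMultisetEquiv F n hn
  have e2 := multisetShiftEquiv F n hnF
  have hcardMul : Nat.card {s : Multiset F // Multiset.card s = n} =
      Nat.choose (q + n - 1) n := by
    have h0 : {s : Multiset F // Multiset.card s = n} = Sym F n := rfl
    rw [h0, Nat.card_eq_fintype_card, Sym.card_sym_eq_multichoose,
      Nat.multichoose_eq, hq]
  have h2 : Nat.card {s : Multiset F // Multiset.card s = n} =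
      Nat.card {s : Multiset F // Multiset.card s = n ∧ s.sum = 0} * q := by
    rw [Nat.card_congr e2, Nat.card_prod]
    congr 1
    rw [Nat.card_eq_fintype_card, hq]
  have key : Nat.card {f : F[X] //
      f.Monic ∧ f.natDegree = n ∧ f.coeff (n - 1) = 0 ∧
        f.Splits} * q = Nat.choose (q + n - 1) n := by
    rw [Nat.card_congr e1, ← hcardMul, h2]
  refine ⟨key, ?_⟩
  have hq1 : 1 ≤ q := by rw [← hq]; exact Fintype.card_pos
  -- `choose (q+n-1) n * n! = q.ascFactorial n = q * ∏ i in range (n-1), (q+i+1)`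
  have hasc : Nat.choose (q + n - 1) n * Nat.factorial n = q.ascFactorial n := by
    rw [Nat.ascFactorial_eq_factorial_mul_choose', Nat.mul_comm]
  have hprod : q.ascFactorial n = q * ∏ i ∈ Finset.range (n - 1), (q + i + 1) := by
    have h0 : n = (n - 1) + 1 := by omega
    rw [h0]
    exact ascFactorial_prod q (n - 1)
  have : (Nat.card {f : F[X] //
      f.Monic ∧ f.natDegree = n ∧ f.coeff (n - 1) = 0 ∧
        f.Splits} * Nat.factorial n) * q =
      (∏ i ∈ Finset.range (n - 1), (q + i + 1)) * q := by
    rw [Nat.mul_right_comm, key, hasc, hprod, Nat.mul_comm]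
  exact Nat.eq_of_mul_eq_mul_right (by omega) this
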